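/- Two-row bead configurations (beads colored red or blue in a top row and bottom row) that admit a unique non-crossing matching are exactly those of the following forms, up to swapping the two rows and up to swapping the two colors: (i) top row = a block of red beads followed by a block of blue beads, bottom row = a block of blue beads followed by a block of red beads; or (ii) top row = a block of red beads, then a block of blue beads, then a block of red beads, and bottom row = a single block of blue beads; in all cases subject to the balance condition that (#red - #blue) in the top row equals (#red - #blue) in the bottom row. -/

import Mathlib

/-- A bead is colored red or blue. -/
inductive Color : Type
  | red
  | blue
  deriving DecidableEq

/-- A matching of a two-row bead configuration with top row `t` and bottom row `b`:
a fixed-point-free involution on all beads in which every pair consists either of two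
beads of different colors in the same row, or of two beads of the same color in
different rows. -/
structure TRMatching (t b : List Color) where
  pair : Fin t.length ⊕ Fin b.length → Fin t.length ⊕ Fin b.length
  invol : ∀ x, pair (pair x) = x
  ne : ∀ x, pair x ≠ x
  topColor : ∀ i j, pair (Sum.inl i) = Sum.inl j → t.get i ≠ t.get j
  botColor : ∀ i j, pair (Sum.inr i) = Sum.inr j → b.get i ≠ b.get j
  crossColor : ∀ i j, pair (Sum.inl i) = Sum.inr j → t.get i = b.get j

/-- Non-crossing condition for a two-row matching, with all arcs drawn in the strip
between the rows: two same-row arcs cross iff their endpoints interleave; a same-row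
arc crosses a cross arc iff the cross arc's endpoint in that row lies strictly between
the arc's endpoints; two cross arcs cross iff their endpoints appear in opposite
orders in the two rows. -/
def TRNonCrossing {t b : List Color} (m : TRMatching t b) : Prop :=
  (∀ i j k l : Fin t.length, m.pair (Sum.inl i) = Sum.inl k →
      m.pair (Sum.inl j) = Sum.inl l → ¬ (i < j ∧ j < k ∧ k < l)) ∧
  (∀ i j k l : Fin b.length, m.pair (Sum.inr i) = Sum.inr k →
      m.pair (Sum.inr j) = Sum.inr l → ¬ (i < j ∧ j < k ∧ k < l)) ∧
  (∀ (a c i : Fin t.length) (j : Fin b.length), m.pair (Sum.inl a) = Sum.inl c →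
      m.pair (Sum.inl i) = Sum.inr j → ¬ (a < i ∧ i < c)) ∧
  (∀ (a c : Fin b.length) (i : Fin t.length) (j : Fin b.length),
      m.pair (Sum.inr a) = Sum.inr c →
      m.pair (Sum.inl i) = Sum.inr j → ¬ (a < j ∧ j < c)) ∧
  (∀ (i i' : Fin t.length) (j j' : Fin b.length), m.pair (Sum.inl i) = Sum.inr j →
      m.pair (Sum.inl i') = Sum.inr j' → i < i' → ¬ j' < j)

/-- Swap the two colors. -/
def swapColor : Color → Color
  | Color.red => Color.blue
  | Color.blue => Color.red

/-- The two basic forms of a two-row configuration `(t, b)` with a unique non-crossing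
matching: (i) top is a red block then a blue block while bottom is a blue block then a
red block; (ii) top is a red block, a blue block, then a red block, while bottom is a
single blue block. -/
def GoodPair (t b : List Color) : Prop :=
  (∃ p q r s : ℕ,
      t = List.replicate p Color.red ++ List.replicate q Color.blue ∧
      b = List.replicate r Color.blue ++ List.replicate s Color.red) ∨
  (∃ p q r s : ℕ,
      t = List.replicate p Color.red ++ List.replicate q Color.blue ++
            List.replicate r Color.red ∧
      b = List.replicate s Color.blue)



namespace Beads

/-- getD with default false -/
def gd (w : List Bool) (k : ℕ) : Bool := w.getD k false

theorem gd_eq {w : List Bool} {k : ℕ} (h : k < w.length) : gd w k = w[k] :=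
  List.getD_eq_getElem w false h

theorem gd_append_low {u v : List Bool} {k : ℕ} (h : k < u.length) :
    gd (u ++ v) k = gd u k := List.getD_append u v false k h

theorem gd_append_high {u v : List Bool} {k : ℕ} (h : u.length ≤ k) :
    gd (u ++ v) k = gd v (k - u.length) := List.getD_append_right u v false k h

theorem gd_replicate {s : Bool} {n k : ℕ} (h : k < n) :
    gd (List.replicate n s) k = s := by
  unfold gd
  rw [List.getD_eq_getElem _ _ (by simpa using h), List.getElem_replicate]

theorem gd_reverse {w : List Bool} {k : ℕ} (h : k < w.length) :
    gd w.reverse k = gd w (w.length - 1 - k) := by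
  unfold gd
  rw [List.getD_eq_getElem _ _ (by simpa using h), List.getD_eq_getElem _ _ (by omega),
    List.getElem_reverse]

theorem gd_drop {w : List Bool} {m j : ℕ} : gd (w.drop m) j = gd w (m + j) := by
  unfold gd
  by_cases h : m + j < w.length
  · rw [List.getD_eq_getElem _ _ (by simp; omega), List.getD_eq_getElem _ _ h, List.getElem_drop]
  · have h2 : (w.drop m).length ≤ j := by simp; omega
    rw [List.getD_eq_default _ _ h2, List.getD_eq_default _ _ (by omega)]

def Balanced (w : List Bool) : Prop := w.count true = w.count false

theorem count_tf (w : List Bool) : w.count true + w.count false = w.length := by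
  induction w with
  | nil => rfl
  | cons a l ih => cases a <;> simp [List.count_cons] <;> omega

/-- Non-crossing matchings on a word of booleans, as involutions on ℕ fixing
everything out of range, pairing opposite letters, non-crossing. -/
structure NCW (w : List Bool) where
  f : ℕ → ℕ
  lt : ∀ i, i < w.length → f i < w.length
  id_of : ∀ i, w.length ≤ i → f i = i
  invol : ∀ i, f (f i) = i
  opp : ∀ i, i < w.length → gd w (f i) = !gd w i
  nc : ∀ i j, i < j → j < f i → f i < f j → False

theorem NCW.ext' {w : List Bool} {m m' : NCW w} (h : m.f = m'.f) : m = m' := by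
  cases m; cases m'; cases h; rfl

theorem NCW.fne {w : List Bool} (m : NCW w) {i : ℕ} (h : i < w.length) : m.f i ≠ i := by
  intro e
  have := m.opp i h
  rw [e] at this
  simp at this

theorem NCW.inj {w : List Bool} (m : NCW w) {a b : ℕ} (h : m.f a = m.f b) : a = b := by
  have := congrArg m.f h
  rwa [m.invol, m.invol] at this

def erase2 (w : List Bool) (i : ℕ) : List Bool := w.take i ++ w.drop (i + 2)

theorem erase2_length {w : List Bool} {i : ℕ} (h : i + 1 < w.length) :
    (erase2 w i).length = w.length - 2 := by
  simp [erase2]; omega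

theorem gd_erase2_low {w : List Bool} {i k : ℕ} (hk : k < i) (hi : i + 1 < w.length) :
    gd (erase2 w i) k = gd w k := by
  unfold erase2
  rw [gd_append_low (by simp; omega)]
  unfold gd
  rw [List.getD_eq_getElem _ _ (by simp; omega), List.getElem_take,
    List.getD_eq_getElem _ _ (by omega)]

theorem gd_erase2_high {w : List Bool} {i k : ℕ} (hk : i ≤ k) (hi : i + 1 < w.length) :
    gd (erase2 w i) k = gd w (k + 2) := by
  unfold erase2
  have ht : (w.take i).length = i := by simp; omega
  rw [gd_append_high (by omega), ht, gd_drop]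
  congr 1
  omega

def shiftUp (i k : ℕ) : ℕ := if k < i then k else k + 2
def shiftDown (i k : ℕ) : ℕ := if k < i then k else k - 2

theorem su_ne (i k : ℕ) : shiftUp i k ≠ i ∧ shiftUp i k ≠ i + 1 := by
  unfold shiftUp; split <;> omega

theorem sd_su (i k : ℕ) : shiftDown i (shiftUp i k) = k := by
  unfold shiftUp shiftDown
  by_cases h : k < i
  · rw [if_pos h, if_pos h]
  · rw [if_neg h, if_neg (by omega)]
    omega

theorem su_sd {i k : ℕ} (h1 : k ≠ i) (h2 : k ≠ i + 1) :
    shiftUp i (shiftDown i k) = k := by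
  unfold shiftUp shiftDown
  by_cases h : k < i
  · rw [if_pos h, if_pos h]
  · rw [if_neg h, if_neg (by omega)]
    omega

theorem su_mono {i x y : ℕ} (h : x < y) : shiftUp i x < shiftUp i y := by
  unfold shiftUp; split <;> split <;> omega

theorem sd_mono {i x y : ℕ} (hx1 : x ≠ i) (hx2 : x ≠ i + 1) (hy1 : y ≠ i) (hy2 : y ≠ i + 1)
    (h : x < y) : shiftDown i x < shiftDown i y := by
  unfold shiftDown; split <;> split <;> omega

theorem gd_shift {w : List Bool} {i : ℕ} (hi : i + 1 < w.length) (k : ℕ) :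
    gd (erase2 w i) k = gd w (shiftUp i k) := by
  unfold shiftUp
  split
  · exact gd_erase2_low (by omega) hi
  · exact gd_erase2_high (by omega) hi

theorem count_erase2 {w : List Bool} {i : ℕ} (h : i + 1 < w.length)
    (hne : gd w (i + 1) = !gd w i) (x : Bool) :
    (erase2 w i).count x + 1 = w.count x := by
  conv_rhs => rw [← List.take_append_drop i w]
  rw [List.drop_eq_getElem_cons (l := w) (i := i) (by omega),
    List.drop_eq_getElem_cons (l := w) (i := i + 1) h]
  unfold erase2
  rw [gd_eq h, gd_eq (show i < w.length by omega)] at hne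
  simp only [List.count_append, List.count_cons, show i + 1 + 1 = i + 2 from rfl]
  cases hx : w[i]'(show i < w.length by omega) <;> cases x <;> simp_all <;> omega

theorem balanced_erase2 {w : List Bool} {i : ℕ} (h : i + 1 < w.length)
    (hne : gd w (i + 1) = !gd w i) : Balanced (erase2 w i) ↔ Balanced w := by
  unfold Balanced
  rw [← count_erase2 h hne true, ← count_erase2 h hne false]
  omega

def insF (i : ℕ) (g : ℕ → ℕ) (k : ℕ) : ℕ :=
  if k = i then i + 1 else if k = i + 1 then i else shiftUp i (g (shiftDown i k))

theorem insF_i {i : ℕ} {g : ℕ → ℕ} : insF i g i = i + 1 := by simp [insF]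

theorem insF_i1 {i : ℕ} {g : ℕ → ℕ} : insF i g (i + 1) = i := by simp [insF]

theorem insF_other {i k : ℕ} {g : ℕ → ℕ} (h1 : k ≠ i) (h2 : k ≠ i + 1) :
    insF i g k = shiftUp i (g (shiftDown i k)) := by simp [insF, h1, h2]

/-- Insert an adjacent matched pair at positions i, i+1. -/
def NCW.ins {w : List Bool} (i : ℕ) (hi : i + 1 < w.length) (hne : gd w (i + 1) = !gd w i)
    (m : NCW (erase2 w i)) : NCW w where
  f := insF i m.f
  lt := by
    intro k hk
    by_cases h1 : k = i
    · subst h1; rw [insF_i]; omega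
    by_cases h2 : k = i + 1
    · subst h2; rw [insF_i1]; omega
    rw [insF_other h1 h2]
    have hsd : shiftDown i k < (erase2 w i).length := by
      rw [erase2_length hi]; unfold shiftDown; split <;> omega
    have := m.lt _ hsd
    rw [erase2_length hi] at this
    unfold shiftUp; split <;> omega
  id_of := by
    intro k hk
    have h1 : k ≠ i := by omega
    have h2 : k ≠ i + 1 := by omega
    rw [insF_other h1 h2]
    have hsd : shiftDown i k = k - 2 := by unfold shiftDown; rw [if_neg (by omega)]
    rw [hsd, m.id_of _ (by rw [erase2_length hi]; omega)]
    unfold shiftUp; rw [if_neg (by omega)]; omega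
  invol := by
    intro k
    by_cases h1 : k = i
    · subst h1; rw [insF_i, insF_i1]
    by_cases h2 : k = i + 1
    · subst h2; rw [insF_i1, insF_i]
    rw [insF_other h1 h2,
      insF_other (su_ne i (m.f (shiftDown i k))).1 (su_ne i (m.f (shiftDown i k))).2,
      sd_su, m.invol, su_sd h1 h2]
  opp := by
    intro k hk
    by_cases h1 : k = i
    · subst h1; rw [insF_i]; exact hne
    by_cases h2 : k = i + 1
    · subst h2; rw [insF_i1, hne, Bool.not_not]
    rw [insF_other h1 h2]
    have hsd : shiftDown i k < (erase2 w i).length := by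
      rw [erase2_length hi]; unfold shiftDown; split <;> omega
    rw [← gd_shift hi, m.opp _ hsd, gd_shift hi, su_sd h1 h2]
  nc := by
    intro k l hkl hl hfk
    by_cases hk1 : k = i
    · rw [hk1, insF_i] at hl; omega
    by_cases hk2 : k = i + 1
    · rw [hk2, insF_i1] at hl; omega
    by_cases hl1 : l = i
    · rw [hl1, insF_i] at hfk; rw [hl1] at hl; omega
    by_cases hl2 : l = i + 1
    · rw [hl2, insF_i1] at hfk; rw [hl2] at hl; omega
    rw [insF_other hk1 hk2] at hl hfk
    rw [insF_other hl1 hl2] at hfk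
    set X := m.f (shiftDown i k) with hX
    set Y := m.f (shiftDown i l) with hY
    have e1 : shiftDown i k < shiftDown i l := sd_mono hk1 hk2 hl1 hl2 hkl
    have e2 : shiftDown i l < X := by
      have := sd_mono hl1 hl2 (su_ne i X).1 (su_ne i X).2 hl
      rwa [sd_su] at this
    have e3 : X < Y := by
      have := sd_mono (su_ne i X).1 (su_ne i X).2 (su_ne i Y).1 (su_ne i Y).2 hfk
      rwa [sd_su, sd_su] at this
    exact m.nc _ _ e1 e2 e3

theorem NCW.ins_f_su {w : List Bool} {i : ℕ} (hi : i + 1 < w.length)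
    (hne : gd w (i + 1) = !gd w i) (m : NCW (erase2 w i)) (k : ℕ) :
    (NCW.ins i hi hne m).f (shiftUp i k) = shiftUp i (m.f k) := by
  show insF i m.f (shiftUp i k) = _
  rw [insF_other (su_ne i k).1 (su_ne i k).2, sd_su]

theorem NCW.ins_inj {w : List Bool} {i : ℕ} (hi : i + 1 < w.length)
    (hne : gd w (i + 1) = !gd w i) {m1 m2 : NCW (erase2 w i)}
    (h : NCW.ins i hi hne m1 = NCW.ins i hi hne m2) : m1 = m2 := by
  apply NCW.ext'
  funext k
  have h2 := congrFun (congrArg NCW.f h) (shiftUp i k)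
  rw [NCW.ins_f_su, NCW.ins_f_su] at h2
  have := congrArg (shiftDown i) h2
  rwa [sd_su, sd_su] at this

/-- Delete an adjacent matched pair at positions i, i+1. -/
def delF (i : ℕ) (g : ℕ → ℕ) (k : ℕ) : ℕ := shiftDown i (g (shiftUp i k))

theorem fsu_ne {w : List Bool} (m : NCW w) {i : ℕ} (hch : m.f i = i + 1) (k : ℕ) :
    m.f (shiftUp i k) ≠ i ∧ m.f (shiftUp i k) ≠ i + 1 := by
  constructor
  · intro e
    have hh : m.f (i + 1) = i := by rw [← hch, m.invol]
    exact (su_ne i k).2 (m.inj (e.trans hh.symm))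
  · intro e
    exact (su_ne i k).1 (m.inj (e.trans hch.symm))

def NCW.del {w : List Bool} (i : ℕ) (hi : i + 1 < w.length) (m : NCW w)
    (hch : m.f i = i + 1) : NCW (erase2 w i) where
  f := delF i m.f
  lt := by
    intro k hk
    rw [erase2_length hi] at hk ⊢
    show shiftDown i (m.f (shiftUp i k)) < w.length - 2
    have hsu : shiftUp i k < w.length := by unfold shiftUp; split <;> omega
    have h1 := m.lt _ hsu
    have h2 := (fsu_ne m hch k).1
    have h3 := (fsu_ne m hch k).2
    unfold shiftDown; split <;> omega
  id_of := by
    intro k hk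
    rw [erase2_length hi] at hk
    show shiftDown i (m.f (shiftUp i k)) = k
    have hsu : shiftUp i k = k + 2 := by unfold shiftUp; rw [if_neg (by omega)]
    rw [hsu, m.id_of _ (by omega)]
    unfold shiftDown; rw [if_neg (by omega)]
    omega
  invol := by
    intro k
    show shiftDown i (m.f (shiftUp i (shiftDown i (m.f (shiftUp i k))))) = k
    rw [su_sd (fsu_ne m hch k).1 (fsu_ne m hch k).2, m.invol, sd_su]
  opp := by
    intro k hk
    rw [erase2_length hi] at hk
    show gd (erase2 w i) (shiftDown i (m.f (shiftUp i k))) = !gd (erase2 w i) k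
    have hsu : shiftUp i k < w.length := by unfold shiftUp; split <;> omega
    rw [gd_shift hi, su_sd (fsu_ne m hch k).1 (fsu_ne m hch k).2, m.opp _ hsu, gd_shift hi]
  nc := by
    intro k l hkl hl hfk
    simp only [delF] at hl hfk
    have hX2 := (fsu_ne m hch k).1
    have hX3 := (fsu_ne m hch k).2
    have hY2 := (fsu_ne m hch l).1
    have hY3 := (fsu_ne m hch l).2
    have e1 : shiftUp i k < shiftUp i l := su_mono hkl
    have e2 : shiftUp i l < m.f (shiftUp i k) := by
      have := su_mono (i := i) hl
      rwa [su_sd hX2 hX3] at this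
    have e3 : m.f (shiftUp i k) < m.f (shiftUp i l) := by
      rcases lt_trichotomy (m.f (shiftUp i k)) (m.f (shiftUp i l)) with h | h | h
      · exact h
      · exact absurd (m.inj h) (by omega)
      · have := sd_mono hY2 hY3 hX2 hX3 h
        omega
    exact m.nc _ _ e1 e2 e3

theorem NCW.del_f {w : List Bool} {i : ℕ} (hi : i + 1 < w.length) (m : NCW w)
    (hch : m.f i = i + 1) (k : ℕ) :
    (NCW.del i hi m hch).f k = shiftDown i (m.f (shiftUp i k)) := rfl

theorem NCW.ins_del {w : List Bool} {i : ℕ} (hi : i + 1 < w.length)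
    (hne : gd w (i + 1) = !gd w i) (m : NCW w) (hch : m.f i = i + 1) :
    NCW.ins i hi hne (NCW.del i hi m hch) = m := by
  apply NCW.ext'
  funext k
  show insF i _ k = m.f k
  by_cases h1 : k = i
  · rw [h1, insF_i, hch]
  by_cases h2 : k = i + 1
  · rw [h2, insF_i1, ← hch, m.invol]
  rw [insF_other h1 h2, NCW.del_f, su_sd h1 h2]
  have hk2 : m.f k ≠ i := by
    intro e
    have hh : m.f (i + 1) = i := by rw [← hch, m.invol]
    exact h2 (m.inj (e.trans hh.symm))
  have hk3 : m.f k ≠ i + 1 := by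
    intro e
    exact h1 (m.inj (e.trans hch.symm))
  rw [su_sd hk2 hk3]

theorem NCW.step {w : List Bool} (m : NCW w) {i d : ℕ} (hd : 2 ≤ d) (h : m.f i = i + d) :
    ∃ j d', 1 ≤ d' ∧ d' < d ∧ m.f j = j + d' := by
  have hilen : i < w.length := by
    by_contra hc
    have := m.id_of i (by omega)
    omega
  have hflen : m.f i < w.length := m.lt i hilen
  have hj : i + 1 < w.length := by omega
  -- consider f (i+1)
  have hne1 : m.f (i + 1) ≠ i + 1 := m.fne hj
  have hne2 : m.f (i + 1) ≠ i := by
    intro e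
    have := congrArg m.f e
    rw [m.invol, h] at this
    omega
  rcases lt_trichotomy (m.f (i + 1)) (i + 1) with hc | hc | hc
  · -- f (i+1) < i  (can't be = i or in (i, i+1))
    have hlt : m.f (i + 1) < i := by omega
    exfalso
    refine m.nc (m.f (i + 1)) i hlt ?_ ?_
    · rw [m.invol]; omega
    · rw [m.invol, h]; omega
  · omega
  · -- i + 1 < f (i+1)
    rcases lt_trichotomy (m.f (i + 1)) (m.f i) with hc2 | hc2 | hc2
    · exact ⟨i + 1, m.f (i + 1) - (i + 1), by omega, by omega, by omega⟩
    · exact absurd (m.inj hc2) (by omega)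
    · exfalso
      exact m.nc i (i + 1) (by omega) (by omega) (by omega)

theorem NCW.innermost {w : List Bool} (m : NCW w) (hw : 0 < w.length) :
    ∃ i, i + 1 < w.length ∧ m.f i = i + 1 := by
  have h0 : 1 ≤ m.f 0 := by
    have := m.fne hw
    omega
  have key : ∀ d, 1 ≤ d → (∃ i, m.f i = i + d) → ∃ j, m.f j = j + 1 := by
    intro d
    induction d using Nat.strong_induction_on with
    | _ d ih =>
      intro hd ⟨i, hi⟩
      rcases Nat.lt_or_ge d 2 with h2 | h2
      · have hd1 : d = 1 := by omega
        subst hd1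
        exact ⟨i, hi⟩
      · obtain ⟨j, d', hd1, hd2, hj⟩ := m.step h2 hi
        exact ih d' hd2 hd1 ⟨j, hj⟩
  obtain ⟨j, hj⟩ := key (m.f 0) h0 ⟨0, by omega⟩
  refine ⟨j, ?_, hj⟩
  have : j < w.length := by
    by_contra hc
    have := m.id_of j (by omega)
    omega
  have := m.lt j this
  omega

theorem NCW.balanced {w : List Bool} (m : NCW w) : Balanced w := by
  suffices h : ∀ n (w : List Bool), w.length = n → NCW w → Balanced w from
    h w.length w rfl m
  intro n
  induction n using Nat.strong_induction_on with
  | _ n ih =>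
    intro w hw m
    rcases Nat.eq_zero_or_pos n with h0 | h0
    · have : w = [] := List.length_eq_zero_iff.mp (by omega)
      subst this
      rfl
    · obtain ⟨i, hi, hch⟩ := m.innermost (by omega)
      have hne : gd w (i + 1) = !gd w i := by
        have := m.opp i (by omega)
        rwa [hch] at this
      have hb' := ih (n - 2) (by omega) (erase2 w i) (by rw [erase2_length hi]; omega)
        (m.del i hi hch)
      exact (balanced_erase2 hi hne).mp hb'

theorem exists_ncw : ∀ n (w : List Bool), w.length = n → Balanced w → Nonempty (NCW w) := by
  intro n
  induction n using Nat.strong_induction_on with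
  | _ n ih =>
    intro w hw hbal
    rcases Nat.eq_zero_or_pos n with h0 | h0
    · refine ⟨⟨id, ?_, ?_, ?_, ?_, ?_⟩⟩
      · intro i h; exact h
      · intro i _; rfl
      · intro i; rfl
      · intro i h; omega
      · intro i j h1 h2 h3; simp only [id] at h2; omega
    · -- find an adjacent opposite pair
      have hex : ∃ i, i + 1 < w.length ∧ gd w (i + 1) = !gd w i := by
        by_contra hc
        push_neg at hc
        have hconst : ∀ i, i + 1 < w.length → gd w (i + 1) = gd w i := by
          intro i hi
          rcases Bool.eq_or_eq_not (gd w (i + 1)) (gd w i) with h | h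
          · exact h
          · exact absurd h (hc i hi)
        have hall : ∀ k, k < w.length → gd w k = gd w 0 := by
          intro k
          induction k with
          | zero => intro _; rfl
          | succ k ihk =>
            intro hk
            rw [hconst k hk, ihk (by omega)]
        have hmem : ∀ x ∈ w, x = gd w 0 := by
          intro x hx
          obtain ⟨k, hk, he⟩ := List.mem_iff_getElem.mp hx
          rw [← he, ← gd_eq hk, hall k hk]
        have hcnt : List.count (gd w 0) w = w.length :=
          List.count_eq_length.mpr (fun b hb => (hmem b hb).symm)
        have htf := count_tf w
        unfold Balanced at hbal
        cases hgd : gd w 0 <;> rw [hgd] at hcnt <;> omega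
      obtain ⟨i, hi, hne⟩ := hex
      obtain ⟨m'⟩ := ih (n - 2) (by omega) (erase2 w i) (by rw [erase2_length hi]; omega)
        ((balanced_erase2 hi hne).mpr hbal)
      exact ⟨NCW.ins i hi hne m'⟩

theorem exists_ncw' {w : List Bool} (h : Balanced w) : Nonempty (NCW w) :=
  exists_ncw w.length w rfl h

def Shape (w : List Bool) : Prop :=
  ∃ s a b c, w = List.replicate a s ++ (List.replicate b (!s) ++ List.replicate c s)

theorem shape_len {s : Bool} {a b c : ℕ} {w : List Bool}
    (hw : w = List.replicate a s ++ (List.replicate b (!s) ++ List.replicate c s)) :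
    w.length = a + b + c := by
  rw [hw]; simp; omega

theorem gd_block1 {s t u : Bool} {a b c k : ℕ} (hk : k < a) :
    gd (List.replicate a s ++ (List.replicate b t ++ List.replicate c u)) k = s := by
  rw [gd_append_low (by simpa using hk), gd_replicate hk]

theorem gd_block2 {s t u : Bool} {a b c k : ℕ} (hk1 : a ≤ k) (hk2 : k < a + b) :
    gd (List.replicate a s ++ (List.replicate b t ++ List.replicate c u)) k = t := by
  rw [gd_append_high (by simpa using hk1)]
  simp only [List.length_replicate]
  rw [gd_append_low (by simp; omega), gd_replicate (by omega)]

theorem gd_block3 {s t u : Bool} {a b c k : ℕ} (hk1 : a + b ≤ k) (hk2 : k < a + b + c) :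
    gd (List.replicate a s ++ (List.replicate b t ++ List.replicate c u)) k = u := by
  rw [gd_append_high (by simp; omega)]
  simp only [List.length_replicate]
  rw [gd_append_high (by simp; omega)]
  simp only [List.length_replicate]
  rw [gd_replicate (by omega)]

theorem shape_b_eq {s : Bool} {a b c : ℕ} {w : List Bool}
    (hw : w = List.replicate a s ++ (List.replicate b (!s) ++ List.replicate c s))
    (hbal : Balanced w) : b = a + c := by
  unfold Balanced at hbal
  rw [hw] at hbal
  simp only [List.count_append, List.count_replicate] at hbal
  cases s <;> norm_num at hbal <;> omega

/-- In a shape word with nonempty first and middle blocks, every non-crossing matching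
pairs position a-1 with position a. -/
theorem forced_chord {s : Bool} {a b c : ℕ} {w : List Bool}
    (hw : w = List.replicate a s ++ (List.replicate b (!s) ++ List.replicate c s))
    (ha : 1 ≤ a) (hb : 1 ≤ b) (m : NCW w) : m.f (a - 1) = a := by
  have hlen : w.length = a + b + c := shape_len hw
  have hcls : ∀ k, k < w.length → gd w k = !s → a ≤ k ∧ k < a + b := by
    intro k hk hv
    by_contra hcon
    have : gd w k = s := by
      rcases Nat.lt_or_ge k a with h | h
      · rw [hw]; exact gd_block1 h
      · rw [hw]; exact gd_block3 (by omega) (by omega)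
    rw [this] at hv
    exact (Bool.eq_not_self s).mp hv
  have hcls2 : ∀ k, k < w.length → gd w k = s → k < a ∨ a + b ≤ k := by
    intro k hk hv
    by_contra hcon
    have : gd w k = !s := by rw [hw]; exact gd_block2 (by omega) (by omega)
    rw [hv] at this
    exact (Bool.eq_not_self s).mp this
  have hp : a - 1 < w.length := by omega
  have hpv : gd w (a - 1) = s := by rw [hw]; exact gd_block1 (by omega)
  have hfp := m.opp _ hp
  rw [hpv] at hfp
  have hfpl := m.lt _ hp
  have hfprange := hcls _ hfpl hfp
  by_contra hcon
  have hfpgt : a < m.f (a - 1) := by omega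
  -- consider f a
  have hA : a < w.length := by omega
  have hav : gd w a = !s := by rw [hw]; exact gd_block2 (by omega) (by omega)
  have hfa := m.opp _ hA
  rw [hav, Bool.not_not] at hfa
  have hfal := m.lt _ hA
  have hfarange := hcls2 _ hfal hfa
  have hfane : m.f a ≠ a - 1 := by
    intro e
    have := congrArg m.f e
    rw [m.invol] at this
    omega
  rcases hfarange with h | h
  · -- f a < a - 1 : crossing (f a, a-1)
    exact m.nc (m.f a) (a - 1) (by omega) (by rw [m.invol]; omega) (by rw [m.invol]; omega)
  · -- f a ≥ a + b : crossing (a-1, a)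
    exact m.nc (a - 1) a (by omega) (by omega) (by omega)

theorem erase2_shape {s : Bool} {a b c : ℕ} (ha : 1 ≤ a) (hb : 1 ≤ b) :
    erase2 (List.replicate a s ++ (List.replicate b (!s) ++ List.replicate c s)) (a - 1) =
      List.replicate (a - 1) s ++ (List.replicate (b - 1) (!s) ++ List.replicate c s) := by
  unfold erase2
  rw [List.take_append, List.drop_append]
  simp only [List.length_replicate, List.take_replicate, List.drop_replicate]
  rw [show a - 1 - a = 0 from by omega, show min (a - 1) a = a - 1 from by omega,
    show a - (a - 1 + 2) = 0 from by omega, show a - 1 + 2 - a = 1 from by omega]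
  simp only [List.take_zero, List.replicate_zero, List.drop_append,
    List.length_replicate, List.drop_replicate, List.nil_append, List.append_nil]
  rw [show (1 : ℕ) - b = 0 from by omega]
  simp

theorem shape_unique : ∀ n (w : List Bool), w.length = n → Shape w → Balanced w →
    ∀ m m' : NCW w, m = m' := by
  intro n
  induction n using Nat.strong_induction_on with
  | _ n ih =>
    rintro w hw ⟨s, a, b, c, hshape⟩ hbal m m'
    rcases Nat.eq_zero_or_pos n with h0 | h0
    · apply NCW.ext'
      funext k
      rw [m.id_of k (by omega), m'.id_of k (by omega)]
    · have hlen : w.length = a + b + c := shape_len hshape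
      have hbac : b = a + c := shape_b_eq hshape hbal
      -- key argument, assuming the first block is nonempty
      have key : ∀ (s : Bool) (a b c : ℕ),
          w = List.replicate a s ++ (List.replicate b (!s) ++ List.replicate c s) →
          1 ≤ a → 1 ≤ b → m = m' := by
        intro s a b c hshape ha hb
        have hlen : w.length = a + b + c := shape_len hshape
        have hch : m.f (a - 1) = a := forced_chord hshape ha hb m
        have hch' : m'.f (a - 1) = a := forced_chord hshape ha hb m'
        have hi : a - 1 + 1 < w.length := by omega
        have hne : gd w (a - 1 + 1) = !gd w (a - 1) := by
          rw [show a - 1 + 1 = a from by omega]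
          rw [hshape, gd_block2 (by omega) (by omega), gd_block1 (by omega)]
        have hch2 : m.f (a - 1) = a - 1 + 1 := by omega
        have hch2' : m'.f (a - 1) = a - 1 + 1 := by omega
        have hsm : Shape (erase2 w (a - 1)) := by
          rw [hshape, erase2_shape ha hb]
          exact ⟨s, a - 1, b - 1, c, rfl⟩
        have hbal2 : Balanced (erase2 w (a - 1)) := (balanced_erase2 hi hne).mpr hbal
        have heq : NCW.del (a - 1) hi m hch2 = NCW.del (a - 1) hi m' hch2' :=
          ih (n - 2) (by omega) _ (by rw [erase2_length hi]; omega) hsm hbal2 _ _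
        have := congrArg (NCW.ins (a - 1) hi hne) heq
        rwa [NCW.ins_del, NCW.ins_del] at this
      rcases Nat.eq_zero_or_pos a with ha0 | ha0
      · -- first block empty: re-express with complemented letter
        subst ha0
        have hb1 : 1 ≤ b := by omega
        have hc1 : 1 ≤ c := by omega
        refine key (!s) b c 0 ?_ hb1 hc1
        rw [hshape]
        simp [Bool.not_not]
      · have hb1 : 1 ≤ b := by omega
        exact key s a b c hshape ha0 hb1

def Quad (w : List Bool) : Prop :=
  ∃ i j k l, i < j ∧ j < k ∧ k < l ∧ l < w.length ∧
    gd w i = gd w k ∧ gd w j = gd w l ∧ gd w j = !gd w i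

theorem bool_ne_iff {x y : Bool} (h : x ≠ y) : x = !y := by
  cases x <;> cases y <;> simp_all

theorem bool_eq_of_ne_not {x y : Bool} (h : ¬(x = !y)) : x = y := by
  cases x <;> cases y <;> simp_all

theorem flip_exists {w : List Bool} : ∀ d j k, k - j = d → j < k → gd w j ≠ gd w k →
    ∃ p, j ≤ p ∧ p < k ∧ gd w p = gd w j ∧ gd w (p + 1) ≠ gd w p := by
  intro d
  induction d using Nat.strong_induction_on with
  | _ d ih =>
    intro j k hd hjk hne
    by_cases h : gd w (j + 1) = gd w j
    · have hjk1 : j + 1 < k := by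
        rcases Nat.lt_or_ge (j + 1) k with h2 | h2
        · exact h2
        · exfalso
          have he : j + 1 = k := by omega
          rw [he] at h
          exact hne h.symm
      obtain ⟨p, hp1, hp2, hp3, hp4⟩ := ih (k - (j + 1)) (by omega) (j + 1) k rfl hjk1
        (by rw [h]; exact hne)
      exact ⟨p, by omega, hp2, by rw [hp3, h], hp4⟩
    · exact ⟨j, le_refl j, by omega, rfl, h⟩

theorem two_of_quad : ∀ n (w : List Bool), w.length = n → Balanced w → Quad w →
    ∃ m m' : NCW w, m ≠ m' := by
  intro n
  induction n using Nat.strong_induction_on with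
  | _ n ih =>
    rintro w hw hbal ⟨i, j, k, l, hij, hjk, hkl, hl, hik, hjl, hji⟩
    by_cases htriple : ∃ p, p + 2 < w.length ∧ gd w (p + 1) = !gd w p ∧
        gd w (p + 2) = !gd w (p + 1)
    · obtain ⟨p, hp, h1, h2⟩ := htriple
      have hi1 : p + 1 < w.length := by omega
      have hi2 : p + 1 + 1 < w.length := by omega
      have h2' : gd w (p + 1 + 1) = !gd w (p + 1) := h2
      obtain ⟨m1'⟩ := exists_ncw' ((balanced_erase2 hi1 h1).mpr hbal)
      obtain ⟨m2'⟩ := exists_ncw' ((balanced_erase2 hi2 h2').mpr hbal)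
      refine ⟨NCW.ins p hi1 h1 m1', NCW.ins (p + 1) hi2 h2' m2', ?_⟩
      intro he
      have hcf := congrFun (congrArg NCW.f he) (p + 1)
      rw [show (NCW.ins p hi1 h1 m1').f (p + 1) = p from insF_i1,
        show (NCW.ins (p + 1) hi2 h2' m2').f (p + 1) = p + 1 + 1 from insF_i] at hcf
      omega
    · push_neg at htriple
      have hnt : ∀ p, p + 2 < w.length → gd w (p + 1) = !gd w p →
          gd w (p + 2) = gd w (p + 1) := fun p h hp => bool_eq_of_ne_not (htriple p h hp)
      set S := gd w i with hS
      have hvj : gd w j = !S := hji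
      have hvk : gd w k = S := hik.symm
      have hvl : gd w l = !S := hjl.symm.trans hji
      have hjkne : gd w j ≠ gd w k := by
        rw [hvj, hvk]
        cases S <;> simp
      obtain ⟨p, hp1, hp2, hp3, hp4⟩ := flip_exists (k - j) j k rfl hjk hjkne
      have hp4' : gd w (p + 1) = !gd w p := bool_ne_iff hp4
      have hvp : gd w p = !S := hp3.trans hvj
      have hvp1 : gd w (p + 1) = S := by rw [hp4', hvp, Bool.not_not]
      have hp1p : 1 ≤ p := by omega
      have hplen : p + 2 < w.length := by omega
      have hprev : gd w (p - 1) = gd w p := by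
        by_contra hcon
        have hr : gd w p = !gd w (p - 1) := bool_ne_iff (fun e => hcon e.symm)
        have hq := hnt (p - 1) (by omega) (by rw [show p - 1 + 1 = p from by omega]; exact hr)
        rw [show p - 1 + 2 = p + 1 from by omega, show p - 1 + 1 = p from by omega] at hq
        exact hp4 hq
      have hnext : gd w (p + 2) = gd w (p + 1) := hnt p hplen hp4'
      have hvprev : gd w (p - 1) = !S := hprev.trans hvp
      have hvnext : gd w (p + 2) = S := hnext.trans hvp1
      have hlne : l ≠ p + 2 := by
        intro e
        rw [e, hvnext] at hvl
        exact (Bool.eq_not_self S).mp hvl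
      have hine : i ≠ p - 1 := by
        intro e
        rw [← e] at hvprev
        exact (Bool.eq_not_self S).mp (hS.symm.trans hvprev)
      have hip : i < p - 1 := by omega
      have hl3 : p + 3 ≤ l := by omega
      -- quadruple in the smaller word
      have hi1 : p + 1 < w.length := by omega
      have hq' : Quad (erase2 w p) := by
        refine ⟨i, p - 1, p, l - 2, by omega, by omega, by omega, ?_, ?_, ?_, ?_⟩
        · rw [erase2_length hi1]; omega
        · rw [gd_erase2_low (by omega) hi1, gd_erase2_high (le_refl p) hi1, ← hS, hvnext]
        · rw [gd_erase2_low (by omega) hi1, gd_erase2_high (by omega) hi1,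
            show l - 2 + 2 = l from by omega, hvprev, hvl]
        · rw [gd_erase2_low (by omega) hi1, gd_erase2_low (by omega) hi1, ← hS, hvprev]
      obtain ⟨m1', m2', hne12⟩ := ih (n - 2) (by omega) (erase2 w p)
        (by rw [erase2_length hi1]; omega) ((balanced_erase2 hi1 hp4').mpr hbal) hq'
      exact ⟨NCW.ins p hi1 hp4' m1', NCW.ins p hi1 hp4' m2',
        fun e => hne12 (NCW.ins_inj hi1 hp4' e)⟩

theorem shape_or_quad (w : List Bool) : Shape w ∨ Quad w := by
  induction w using List.reverseRecOn with
  | nil => exact Or.inl ⟨true, 0, 0, 0, by simp⟩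
  | append_singleton w x ih =>
    rcases ih with hs | hq
    · obtain ⟨s, a, b, c, hw⟩ := hs
      by_cases hx : x = s
      · refine Or.inl ⟨s, a, b, c + 1, ?_⟩
        rw [hw, hx, List.replicate_succ']
        simp [List.append_assoc]
      · have hx' : x = !s := bool_ne_iff hx
        rcases Nat.eq_zero_or_pos c with hc | hc
        · subst hc
          refine Or.inl ⟨s, a, b + 1, 0, ?_⟩
          rw [hw, hx', List.replicate_succ']
          simp [List.append_assoc]
        rcases Nat.eq_zero_or_pos a with ha | ha
        · subst ha
          refine Or.inl ⟨!s, b, c, 1, ?_⟩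
          rw [hw, hx']
          simp [Bool.not_not, List.replicate_succ', List.append_assoc]
        rcases Nat.eq_zero_or_pos b with hb | hb
        · subst hb
          refine Or.inl ⟨s, a + c, 1, 0, ?_⟩
          rw [hw, hx', List.replicate_add]
          simp [List.append_assoc]
        · right
          have hlen : w.length = a + b + c := shape_len hw
          have g0 : gd (w ++ [x]) 0 = s := by
            rw [gd_append_low (by omega), hw, gd_block1 (by omega)]
          have ga : gd (w ++ [x]) a = !s := by
            rw [gd_append_low (by omega), hw, gd_block2 (by omega) (by omega)]
          have gab : gd (w ++ [x]) (a + b) = s := by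
            rw [gd_append_low (by omega), hw, gd_block3 (by omega) (by omega)]
          have gabc : gd (w ++ [x]) (a + b + c) = !s := by
            rw [gd_append_high (by omega), show a + b + c - w.length = 0 from by omega, hx']
            rfl
          refine ⟨0, a, a + b, a + b + c, by omega, by omega, by omega, ?_, ?_, ?_, ?_⟩
          · simp; omega
          · rw [g0, gab]
          · rw [ga, gabc]
          · rw [ga, g0]
    · obtain ⟨i, j, k, l, h1, h2, h3, h4, h5, h6, h7⟩ := hq
      right
      refine ⟨i, j, k, l, h1, h2, h3, by simp; omega, ?_, ?_, ?_⟩ <;>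
        rw [gd_append_low (by omega), gd_append_low (by omega)] <;> assumption

theorem unique_iff_word {w : List Bool} :
    (Nonempty (NCW w) ∧ ∀ m m' : NCW w, m = m') ↔ (Balanced w ∧ Shape w) := by
  constructor
  · rintro ⟨⟨m⟩, huniq⟩
    refine ⟨m.balanced, ?_⟩
    rcases shape_or_quad w with h | h
    · exact h
    · obtain ⟨m1, m2, hne⟩ := two_of_quad w.length w rfl m.balanced h
      exact absurd (huniq m1 m2) hne
  · rintro ⟨hbal, hsh⟩
    exact ⟨exists_ncw' hbal, shape_unique w.length w rfl hsh hbal⟩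

/-! ## Translation between two-row matchings and word matchings -/

def topSign : Color → Bool
  | Color.red => true
  | Color.blue => false

def botSign : Color → Bool
  | Color.red => false
  | Color.blue => true

def wrd (t b : List Color) : List Bool := t.map topSign ++ (b.map botSign).reverse

theorem wrd_length (t b : List Color) : (wrd t b).length = t.length + b.length := by
  simp [wrd]

theorem gd_wrd_top {t b : List Color} {i : ℕ} (h : i < t.length) :
    gd (wrd t b) i = topSign (t.get ⟨i, h⟩) := by
  unfold wrd
  rw [gd_append_low (by simpa using h), gd_eq (by simpa using h), List.getElem_map]
  rfl

theorem gd_wrd_bot {t b : List Color} {j : ℕ} (h : j < b.length) :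
    gd (wrd t b) (t.length + (b.length - 1 - j)) = botSign (b.get ⟨j, h⟩) := by
  unfold wrd
  rw [gd_append_high (by simp)]
  rw [show t.length + (b.length - 1 - j) - (t.map topSign).length = b.length - 1 - j from
    by simp]
  rw [gd_reverse (by simp; omega)]
  rw [show (b.map botSign).length - 1 - (b.length - 1 - j) = j from by simp; omega]
  rw [gd_eq (by simpa using h), List.getElem_map]
  rfl

def enc (t b : List Color) : Fin t.length ⊕ Fin b.length → ℕ
  | Sum.inl i => i
  | Sum.inr j => t.length + (b.length - 1 - j)

theorem enc_lt {t b : List Color} (x : Fin t.length ⊕ Fin b.length) :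
    enc t b x < t.length + b.length := by
  rcases x with i | j
  · have := i.isLt
    show (i : ℕ) < _
    omega
  · have := j.isLt
    show t.length + (b.length - 1 - (j : ℕ)) < _
    omega

def dec (t b : List Color) (k : ℕ) (hk : k < t.length + b.length) :
    Fin t.length ⊕ Fin b.length :=
  if h : k < t.length then Sum.inl ⟨k, h⟩
  else Sum.inr ⟨t.length + b.length - 1 - k, by omega⟩

theorem enc_dec {t b : List Color} {k : ℕ} (hk : k < t.length + b.length) :
    enc t b (dec t b k hk) = k := by
  unfold dec
  split
  · rfl
  · show t.length + (b.length - 1 - (t.length + b.length - 1 - k)) = k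
    omega

theorem dec_enc {t b : List Color} (x : Fin t.length ⊕ Fin b.length)
    (h : enc t b x < t.length + b.length) : dec t b (enc t b x) h = x := by
  rcases x with i | j
  · have hi := i.isLt
    unfold dec
    rw [dif_pos (show enc t b (Sum.inl i) < t.length from hi)]
    rfl
  · have hj := j.isLt
    unfold dec
    rw [dif_neg (show ¬ enc t b (Sum.inr j) < t.length from by
      show ¬ t.length + (b.length - 1 - (j : ℕ)) < t.length
      omega)]
    congr 1
    apply Fin.ext
    show t.length + b.length - 1 - (t.length + (b.length - 1 - (j : ℕ))) = (j : ℕ)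
    omega

theorem gd_enc_top {t b : List Color} (i : Fin t.length) :
    gd (wrd t b) (enc t b (Sum.inl i)) = topSign (t.get i) := by
  have := gd_wrd_top (b := b) i.isLt
  exact this

theorem gd_enc_bot {t b : List Color} (j : Fin b.length) :
    gd (wrd t b) (enc t b (Sum.inr j)) = botSign (b.get j) := by
  have := gd_wrd_bot (t := t) j.isLt
  exact this

theorem sign_tt {c c' : Color} (h : c ≠ c') : topSign c' = !topSign c := by
  cases c <;> cases c' <;> simp [topSign] <;> exact h rfl

theorem sign_tt' {c c' : Color} (h : topSign c' = !topSign c) : c ≠ c' := by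
  cases c <;> cases c' <;> simp [topSign] at h ⊢

theorem sign_bb {c c' : Color} (h : c ≠ c') : botSign c' = !botSign c := by
  cases c <;> cases c' <;> simp [botSign] <;> exact h rfl

theorem sign_bb' {c c' : Color} (h : botSign c' = !botSign c) : c ≠ c' := by
  cases c <;> cases c' <;> simp [botSign] at h ⊢

theorem sign_tb {c c' : Color} (h : c = c') : botSign c' = !topSign c := by
  subst h; cases c <;> rfl

theorem sign_tb' {c c' : Color} (h : botSign c' = !topSign c) : c = c' := by
  cases c <;> cases c' <;> simp [botSign, topSign] at h ⊢

theorem sign_bt {c c' : Color} (h : c = c') : topSign c' = !botSign c := by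
  subst h; cases c <;> rfl

theorem fin_lt {n : ℕ} {a b : Fin n} (h : (a : ℕ) < (b : ℕ)) : a < b := h

theorem enc_inl {t b : List Color} (i : Fin t.length) : enc t b (Sum.inl i) = i := rfl

theorem enc_inr {t b : List Color} (j : Fin b.length) :
    enc t b (Sum.inr j) = t.length + (b.length - 1 - j) := rfl

def encPair {t b : List Color} (m : TRMatching t b) (k : ℕ) : ℕ :=
  if hk : k < t.length + b.length then enc t b (m.pair (dec t b k hk)) else k

theorem encPair_lt {t b : List Color} (m : TRMatching t b) {k : ℕ}
    (hk : k < t.length + b.length) : encPair m k = enc t b (m.pair (dec t b k hk)) :=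
  dif_pos hk

theorem encPair_ge {t b : List Color} (m : TRMatching t b) {k : ℕ}
    (hk : ¬ k < t.length + b.length) : encPair m k = k := dif_neg hk

def toNCW {t b : List Color} (m : TRMatching t b) (hnc : TRNonCrossing m) :
    NCW (wrd t b) where
  f := encPair m
  lt := by
    intro k hk
    rw [wrd_length] at hk ⊢
    rw [encPair_lt m hk]
    exact enc_lt _
  id_of := by
    intro k hk
    rw [wrd_length] at hk
    exact encPair_ge m (by omega)
  invol := by
    intro k
    by_cases hk : k < t.length + b.length
    · rw [encPair_lt m hk, encPair_lt m (enc_lt _), dec_enc, m.invol, enc_dec]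
    · rw [encPair_ge m hk, encPair_ge m hk]
  opp := by
    intro k hk0
    rw [wrd_length] at hk0
    rw [encPair_lt m hk0]
    rcases hdk : dec t b k hk0 with i | j
    · have hkv : enc t b (Sum.inl i) = k := by rw [← hdk]; exact enc_dec hk0
      rcases hpk : m.pair (Sum.inl i) with i2 | j2 <;> rw [← hkv]
      · rw [gd_enc_top, gd_enc_top]
        exact sign_tt (m.topColor i i2 hpk)
      · rw [gd_enc_bot, gd_enc_top]
        exact sign_tb (m.crossColor i j2 hpk)
    · have hkv : enc t b (Sum.inr j) = k := by rw [← hdk]; exact enc_dec hk0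
      rcases hpk : m.pair (Sum.inr j) with i2 | j2 <;> rw [← hkv]
      · have hp2 : m.pair (Sum.inl i2) = Sum.inr j := by rw [← hpk, m.invol]
        rw [gd_enc_top, gd_enc_bot]
        exact sign_bt (m.crossColor i2 j hp2).symm
      · rw [gd_enc_bot, gd_enc_bot]
        exact sign_bb (m.botColor j j2 hpk)
  nc := by
    obtain ⟨hn1, hn2, hn3, hn4, hn5⟩ := hnc
    intro k l hkl hlfk hfkfl
    by_cases hk : k < t.length + b.length
    swap
    · rw [encPair_ge m hk] at hlfk
      omega
    by_cases hl : l < t.length + b.length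
    swap
    · rw [encPair_ge m hl] at hfkfl
      omega
    rw [encPair_lt m hk] at hlfk hfkfl
    rw [encPair_lt m hl] at hfkfl
    rcases hdk : dec t b k hk with i | j <;> rw [hdk] at hlfk hfkfl
    · have hkv : (i : ℕ) = k := by rw [← enc_inl (t := t) (b := b) i, ← hdk]; exact enc_dec hk
      have hib := i.isLt
      rcases hdl : dec t b l hl with i' | j' <;> rw [hdl] at hfkfl
      · -- top, top
        have hlv : (i' : ℕ) = l := by
          rw [← enc_inl (t := t) (b := b) i', ← hdl]; exact enc_dec hl
        have hib' := i'.isLt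
        rcases hpk : m.pair (Sum.inl i) with i2 | j2 <;> rw [hpk] at hlfk hfkfl <;>
          rcases hpl : m.pair (Sum.inl i') with i2' | j2' <;> rw [hpl] at hfkfl <;>
          simp only [enc_inl, enc_inr] at hlfk hfkfl
        · exact hn1 i i' i2 i2' hpk hpl
            ⟨fin_lt (by omega), fin_lt (by omega), fin_lt (by omega)⟩
        · have hjb := j2'.isLt
          exact hn3 i i2 i' j2' hpk hpl ⟨fin_lt (by omega), fin_lt (by omega)⟩
        · have hib2 := i2'.isLt
          have hjb := j2.isLt
          omega
        · have hjb := j2.isLt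
          have hjb' := j2'.isLt
          exact hn5 i i' j2 j2' hpk hpl (fin_lt (by omega)) (fin_lt (by omega))
      · -- top, bottom
        have hlv : t.length + (b.length - 1 - (j' : ℕ)) = l := by
          rw [← enc_inr (t := t) (b := b) j', ← hdl]; exact enc_dec hl
        have hjb' := j'.isLt
        rcases hpk : m.pair (Sum.inl i) with i2 | j2 <;> rw [hpk] at hlfk hfkfl <;>
          simp only [enc_inl, enc_inr] at hlfk hfkfl
        · have hib2 := i2.isLt
          omega
        · rcases hpl : m.pair (Sum.inr j') with i2' | j2' <;> rw [hpl] at hfkfl <;>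
            simp only [enc_inl, enc_inr] at hfkfl
          · have hib2 := i2'.isLt
            have hjb2 := j2.isLt
            omega
          · have hjb2 := j2.isLt
            have hjb2' := j2'.isLt
            have hp2 : m.pair (Sum.inr j2') = Sum.inr j' := by rw [← hpl, m.invol]
            exact hn4 j2' j' i j2 hp2 hpk ⟨fin_lt (by omega), fin_lt (by omega)⟩
    · have hkv : t.length + (b.length - 1 - (j : ℕ)) = k := by
        rw [← enc_inr (t := t) (b := b) j, ← hdk]; exact enc_dec hk
      have hjb := j.isLt
      rcases hdl : dec t b l hl with i' | j' <;> rw [hdl] at hfkfl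
      · -- bottom, top : impossible
        have hlv : (i' : ℕ) = l := by
          rw [← enc_inl (t := t) (b := b) i', ← hdl]; exact enc_dec hl
        have hib' := i'.isLt
        omega
      · -- bottom, bottom
        have hlv : t.length + (b.length - 1 - (j' : ℕ)) = l := by
          rw [← enc_inr (t := t) (b := b) j', ← hdl]; exact enc_dec hl
        have hjb' := j'.isLt
        rcases hpk : m.pair (Sum.inr j) with i2 | j2 <;> rw [hpk] at hlfk hfkfl <;>
          simp only [enc_inl, enc_inr] at hlfk hfkfl
        · have hib2 := i2.isLt
          omega
        · rcases hpl : m.pair (Sum.inr j') with i2' | j2' <;> rw [hpl] at hfkfl <;>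
            simp only [enc_inl, enc_inr] at hfkfl
          · have hib2 := i2'.isLt
            have hjb2 := j2.isLt
            omega
          · have hjb2 := j2.isLt
            have hjb2' := j2'.isLt
            have hp2 : m.pair (Sum.inr j2) = Sum.inr j := by rw [← hpk, m.invol]
            have hp2' : m.pair (Sum.inr j2') = Sum.inr j' := by rw [← hpl, m.invol]
            exact hn2 j2' j2 j' j hp2' hp2
              ⟨fin_lt (by omega), fin_lt (by omega), fin_lt (by omega)⟩

theorem TRMatching.ext' {t b : List Color} {m m' : TRMatching t b} (h : m.pair = m'.pair) :
    m = m' := by cases m; cases m'; cases h; rfl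

theorem enc_inj {t b : List Color} {x y : Fin t.length ⊕ Fin b.length}
    (h : enc t b x = enc t b y) : x = y := by
  rcases x with i | j <;> rcases y with i' | j' <;> simp only [enc_inl, enc_inr] at h
  · exact congrArg Sum.inl (Fin.ext h)
  · have := i.isLt
    have := j'.isLt
    omega
  · have := j.isLt
    have := i'.isLt
    omega
  · have := j.isLt
    have := j'.isLt
    exact congrArg Sum.inr (Fin.ext (by omega))

theorem gf_lt {t b : List Color} (g : NCW (wrd t b)) (x : Fin t.length ⊕ Fin b.length) :
    g.f (enc t b x) < t.length + b.length := by
  have h1 : enc t b x < (wrd t b).length := by rw [wrd_length]; exact enc_lt x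
  have := g.lt _ h1
  rwa [wrd_length] at this

def decPair {t b : List Color} (g : NCW (wrd t b)) (x : Fin t.length ⊕ Fin b.length) :
    Fin t.length ⊕ Fin b.length :=
  dec t b (g.f (enc t b x)) (gf_lt g x)

theorem enc_decPair {t b : List Color} (g : NCW (wrd t b)) (x : Fin t.length ⊕ Fin b.length) :
    enc t b (decPair g x) = g.f (enc t b x) := enc_dec _

def toTRM {t b : List Color} (g : NCW (wrd t b)) : TRMatching t b where
  pair := decPair g
  invol := by
    intro x
    apply enc_inj
    rw [enc_decPair, enc_decPair, g.invol]
  ne := by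
    intro x he
    have h := congrArg (enc t b) he
    rw [enc_decPair] at h
    exact g.fne (by rw [wrd_length]; exact enc_lt x) h
  topColor := by
    intro i j h
    have h2 := congrArg (enc t b) h
    rw [enc_decPair] at h2
    have ho := g.opp (enc t b (Sum.inl i)) (by rw [wrd_length]; exact enc_lt _)
    rw [h2, gd_enc_top, gd_enc_top] at ho
    exact sign_tt' ho
  botColor := by
    intro i j h
    have h2 := congrArg (enc t b) h
    rw [enc_decPair] at h2
    have ho := g.opp (enc t b (Sum.inr i)) (by rw [wrd_length]; exact enc_lt _)
    rw [h2, gd_enc_bot, gd_enc_bot] at ho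
    exact sign_bb' ho
  crossColor := by
    intro i j h
    have h2 := congrArg (enc t b) h
    rw [enc_decPair] at h2
    have ho := g.opp (enc t b (Sum.inl i)) (by rw [wrd_length]; exact enc_lt _)
    rw [h2, gd_enc_bot, gd_enc_top] at ho
    exact sign_tb' ho

theorem pair_f {t b : List Color} (g : NCW (wrd t b)) {x y : Fin t.length ⊕ Fin b.length}
    (h : (toTRM g).pair x = y) : g.f (enc t b x) = enc t b y := by
  have h2 := congrArg (enc t b) h
  rwa [show enc t b ((toTRM g).pair x) = g.f (enc t b x) from enc_decPair g x] at h2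

theorem toTRM_nc {t b : List Color} (g : NCW (wrd t b)) : TRNonCrossing (toTRM g) := by
  refine ⟨?_, ?_, ?_, ?_, ?_⟩
  · rintro i j k l h1 h2 ⟨a1, a2, a3⟩
    have e1 := pair_f g h1
    have e2 := pair_f g h2
    exact g.nc (enc t b (Sum.inl i)) (enc t b (Sum.inl j)) a1 (by rw [e1]; exact a2)
      (by rw [e1, e2]; exact a3)
  · rintro i j k l h1 h2 ⟨a1, a2, a3⟩
    have hi := i.isLt
    have hj := j.isLt
    have hk := k.isLt
    have hl := l.isLt
    have e1 : g.f (enc t b (Sum.inr k)) = enc t b (Sum.inr i) :=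
      pair_f g (by rw [← h1, (toTRM g).invol])
    have e2 : g.f (enc t b (Sum.inr l)) = enc t b (Sum.inr j) :=
      pair_f g (by rw [← h2, (toTRM g).invol])
    refine g.nc (enc t b (Sum.inr l)) (enc t b (Sum.inr k)) ?_ ?_ ?_
    · simp only [enc_inr]
      have : (k : ℕ) < l := a3
      omega
    · rw [e2]
      simp only [enc_inr]
      have : (j : ℕ) < k := a2
      omega
    · rw [e1, e2]
      simp only [enc_inr]
      have : (i : ℕ) < j := a1
      omega
  · rintro a c i j h1 h2 ⟨a1, a2⟩
    have hc := c.isLt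
    have hj := j.isLt
    have e1 := pair_f g h1
    have e2 := pair_f g h2
    refine g.nc (enc t b (Sum.inl a)) (enc t b (Sum.inl i)) a1 (by rw [e1]; exact a2) ?_
    · rw [e1, e2]
      simp only [enc_inl, enc_inr]
      omega
  · rintro a c i j h1 h2 ⟨a1, a2⟩
    have ha := a.isLt
    have hc := c.isLt
    have hj := j.isLt
    have hi := i.isLt
    have e1 : g.f (enc t b (Sum.inr c)) = enc t b (Sum.inr a) :=
      pair_f g (by rw [← h1, (toTRM g).invol])
    have e2 := pair_f g h2
    refine g.nc (enc t b (Sum.inl i)) (enc t b (Sum.inr c)) ?_ ?_ ?_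
    · simp only [enc_inl, enc_inr]
      omega
    · rw [e2]
      simp only [enc_inl, enc_inr]
      have : (j : ℕ) < c := a2
      omega
    · rw [e1, e2]
      simp only [enc_inr]
      have : (a : ℕ) < j := a1
      omega
  · intro i i' j j' h1 h2 hii' hj'j
    have hi' := i'.isLt
    have hj := j.isLt
    have hj' := j'.isLt
    have e1 := pair_f g h1
    have e2 := pair_f g h2
    refine g.nc (enc t b (Sum.inl i)) (enc t b (Sum.inl i')) hii' ?_ ?_
    · rw [e1]
      simp only [enc_inl, enc_inr]
      omega
    · rw [e1, e2]
      simp only [enc_inr]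
      have : (j' : ℕ) < j := hj'j
      omega

theorem toNCW_toTRM {t b : List Color} (g : NCW (wrd t b)) (h : TRNonCrossing (toTRM g)) :
    toNCW (toTRM g) h = g := by
  apply NCW.ext'
  funext k
  show encPair (toTRM g) k = g.f k
  by_cases hk : k < t.length + b.length
  · rw [encPair_lt _ hk]
    rw [show enc t b ((toTRM g).pair (dec t b k hk)) = g.f (enc t b (dec t b k hk)) from
      enc_decPair g _, enc_dec hk]
  · rw [encPair_ge _ hk, g.id_of k (by rw [wrd_length]; omega)]

theorem toTRM_toNCW {t b : List Color} (m : TRMatching t b) (hm : TRNonCrossing m) :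
    toTRM (toNCW m hm) = m := by
  apply TRMatching.ext'
  funext x
  apply enc_inj
  rw [show enc t b ((toTRM (toNCW m hm)).pair x) = (toNCW m hm).f (enc t b x) from
    enc_decPair _ x]
  show encPair m (enc t b x) = enc t b (m.pair x)
  rw [encPair_lt m (enc_lt x), dec_enc]

theorem toNCW_congr {t b : List Color} {m1 m2 : TRMatching t b} (h : m1 = m2)
    (p1 : TRNonCrossing m1) (p2 : TRNonCrossing m2) : toNCW m1 p1 = toNCW m2 p2 := by
  subst h; rfl

theorem main_equiv (t b : List Color) :
    (∃! m : TRMatching t b, TRNonCrossing m) ↔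
      (Nonempty (NCW (wrd t b)) ∧ ∀ g g' : NCW (wrd t b), g = g') := by
  constructor
  · rintro ⟨m, hm, huniq⟩
    refine ⟨⟨toNCW m hm⟩, ?_⟩
    intro g g'
    have h1 : toTRM g = m := huniq _ (toTRM_nc g)
    have h2 : toTRM g' = m := huniq _ (toTRM_nc g')
    rw [← toNCW_toTRM g (toTRM_nc g), ← toNCW_toTRM g' (toTRM_nc g')]
    exact toNCW_congr (h1.trans h2.symm) _ _
  · rintro ⟨⟨g⟩, huniq⟩
    refine ⟨toTRM g, toTRM_nc g, ?_⟩
    intro m hm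
    rw [← toTRM_toNCW m hm, huniq (toNCW m hm) g]

/-! ## Relating the word to the color rows -/

theorem topSign_inj : Function.Injective topSign := by
  intro a b h
  cases a <;> cases b <;> simp_all [topSign]

theorem botSign_inj : Function.Injective botSign := by
  intro a b h
  cases a <;> cases b <;> simp_all [botSign]

theorem count_wrd_true (t b : List Color) :
    (wrd t b).count true = t.count Color.red + b.count Color.blue := by
  unfold wrd
  rw [List.count_append, List.count_reverse]
  have h1 := List.count_map_of_injective t topSign topSign_inj Color.red
  have h2 := List.count_map_of_injective b botSign botSign_inj Color.blue
  simp only [topSign, botSign] at h1 h2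
  rw [h1, h2]

theorem count_wrd_false (t b : List Color) :
    (wrd t b).count false = t.count Color.blue + b.count Color.red := by
  unfold wrd
  rw [List.count_append, List.count_reverse]
  have h1 := List.count_map_of_injective t topSign topSign_inj Color.blue
  have h2 := List.count_map_of_injective b botSign botSign_inj Color.red
  simp only [topSign, botSign] at h1 h2
  rw [h1, h2]

theorem bal_iff (t b : List Color) :
    Balanced (wrd t b) ↔
      ((t.count Color.red : ℤ) - t.count Color.blue
        = (b.count Color.red : ℤ) - b.count Color.blue) := by
  unfold Balanced
  rw [count_wrd_true, count_wrd_false]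
  omega

theorem swap_invol (c : Color) : swapColor (swapColor c) = c := by
  cases c <;> rfl

theorem map_swap_swap (t : List Color) : (t.map swapColor).map swapColor = t := by
  induction t with
  | nil => rfl
  | cons a l ih => simp [swap_invol, ih]

/-- Color of given top-sign. -/
def tcol (s : Bool) : Color := if s then Color.red else Color.blue

/-- Color of given bottom-sign. -/
def bcol (s : Bool) : Color := if s then Color.blue else Color.red

theorem topSign_tcol (s : Bool) : topSign (tcol s) = s := by cases s <;> rfl
theorem botSign_bcol (s : Bool) : botSign (bcol s) = s := by cases s <;> rfl

theorem good_shape {t b : List Color}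
    (h : GoodPair t b ∨ GoodPair b t ∨ GoodPair (t.map swapColor) (b.map swapColor) ∨
      GoodPair (b.map swapColor) (t.map swapColor)) : Shape (wrd t b) := by
  rcases h with (⟨p, q, r, s, ht, hb⟩ | ⟨p, q, r, s, ht, hb⟩) |
    (⟨p, q, r, s, ht, hb⟩ | ⟨p, q, r, s, ht, hb⟩) |
    (⟨p, q, r, s, ht, hb⟩ | ⟨p, q, r, s, ht, hb⟩) |
    (⟨p, q, r, s, ht, hb⟩ | ⟨p, q, r, s, ht, hb⟩)
  · -- t = R^p B^q, b = B^r R^s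
    refine ⟨true, p, q + s, r, ?_⟩
    rw [ht, hb]
    simp only [wrd, List.map_append, List.map_replicate, List.reverse_append,
      List.reverse_replicate, List.append_assoc, topSign, botSign, List.replicate_add,
      Bool.not_true, Bool.not_false]
  · -- t = R^p B^q R^r, b = B^s
    refine ⟨true, p, q, r + s, ?_⟩
    rw [ht, hb]
    simp only [wrd, List.map_append, List.map_replicate, List.reverse_append,
      List.reverse_replicate, List.append_assoc, topSign, botSign, List.replicate_add,
      Bool.not_true, Bool.not_false]
  · -- b = R^p B^q, t = B^r R^s
    refine ⟨false, r, s + q, p, ?_⟩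
    rw [ht, hb]
    simp only [wrd, List.map_append, List.map_replicate, List.reverse_append,
      List.reverse_replicate, List.append_assoc, topSign, botSign, List.replicate_add,
      Bool.not_true, Bool.not_false]
  · -- b = R^p B^q R^r, t = B^s
    refine ⟨false, s + r, q, p, ?_⟩
    rw [ht, hb]
    simp only [wrd, List.map_append, List.map_replicate, List.reverse_append,
      List.reverse_replicate, List.append_assoc, topSign, botSign, List.replicate_add,
      Bool.not_true, Bool.not_false]
  · -- t.map swap = R^p B^q, b.map swap = B^r R^s
    have ht' : t = List.replicate p Color.blue ++ List.replicate q Color.red := by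
      rw [← map_swap_swap t, ht]
      simp [swapColor]
    have hb' : b = List.replicate r Color.red ++ List.replicate s Color.blue := by
      rw [← map_swap_swap b, hb]
      simp [swapColor]
    refine ⟨false, p, q + s, r, ?_⟩
    rw [ht', hb']
    simp only [wrd, List.map_append, List.map_replicate, List.reverse_append,
      List.reverse_replicate, List.append_assoc, topSign, botSign, List.replicate_add,
      Bool.not_true, Bool.not_false]
  · have ht' : t = List.replicate p Color.blue ++ (List.replicate q Color.red ++
        List.replicate r Color.blue) := by
      rw [← map_swap_swap t, ht]
      simp [swapColor]
    have hb' : b = List.replicate s Color.red := by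
      rw [← map_swap_swap b, hb]
      simp [swapColor]
    refine ⟨false, p, q, r + s, ?_⟩
    rw [ht', hb']
    simp only [wrd, List.map_append, List.map_replicate, List.reverse_append,
      List.reverse_replicate, List.append_assoc, topSign, botSign, List.replicate_add,
      Bool.not_true, Bool.not_false]
  · -- b.map swap = R^p B^q, t.map swap = B^r R^s
    have hb' : b = List.replicate p Color.blue ++ List.replicate q Color.red := by
      rw [← map_swap_swap b, ht]
      simp [swapColor]
    have ht' : t = List.replicate r Color.red ++ List.replicate s Color.blue := by
      rw [← map_swap_swap t, hb]
      simp [swapColor]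
    refine ⟨true, r, s + q, p, ?_⟩
    rw [ht', hb']
    simp only [wrd, List.map_append, List.map_replicate, List.reverse_append,
      List.reverse_replicate, List.append_assoc, topSign, botSign, List.replicate_add,
      Bool.not_true, Bool.not_false]
  · have hb' : b = List.replicate p Color.blue ++ (List.replicate q Color.red ++
        List.replicate r Color.blue) := by
      rw [← map_swap_swap b, ht]
      simp [swapColor]
    have ht' : t = List.replicate s Color.red := by
      rw [← map_swap_swap t, hb]
      simp [swapColor]
    refine ⟨true, s + r, q, p, ?_⟩
    rw [ht', hb']
    simp only [wrd, List.map_append, List.map_replicate, List.reverse_append,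
      List.reverse_replicate, List.append_assoc, topSign, botSign, List.replicate_add,
      Bool.not_true, Bool.not_false]

theorem top_eq {t u : List Color} (h : t.map topSign = u.map topSign) : t = u :=
  List.map_injective_iff.mpr topSign_inj h

theorem bot_eq {v u : List Color} (h : v.map botSign = u.map botSign) : v = u :=
  List.map_injective_iff.mpr botSign_inj h

theorem shape_good {t b : List Color} (h : Shape (wrd t b)) :
    GoodPair t b ∨ GoodPair b t ∨ GoodPair (t.map swapColor) (b.map swapColor) ∨
      GoodPair (b.map swapColor) (t.map swapColor) := by
  obtain ⟨s, a, q, c, hw⟩ := h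
  have hT : t.map topSign = (wrd t b).take t.length := by
    unfold wrd
    rw [show t.length = (t.map topSign).length from by simp, List.take_left]
  have hB : (b.map botSign).reverse = (wrd t b).drop t.length := by
    unfold wrd
    rw [show t.length = (t.map topSign).length from by simp, List.drop_left]
  have hlen : t.length + b.length = a + q + c := by
    have h0 := wrd_length t b
    rw [hw] at h0
    simp at h0
    omega
  rcases Nat.lt_or_ge a t.length with hTa | hTa
  · rcases Nat.lt_or_ge (a + q) t.length with hTq | hTq
    · -- case 3 : a + q < T
      have h1 : t.map topSign = List.replicate a s ++
          (List.replicate q (!s) ++ List.replicate (t.length - a - q) s) := by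
        rw [hT, hw, List.take_append]
        simp only [List.length_replicate, List.take_replicate]
        rw [List.take_append]
        simp only [List.length_replicate, List.take_replicate]
        rw [show min t.length a = a from by omega,
          show min (t.length - a) q = q from by omega,
          show (t.length - a - q) ⊓ c = t.length - a - q from by omega]
      have h2' : (b.map botSign).reverse = List.replicate (a + q + c - t.length) s := by
        rw [hB, hw, List.drop_append]
        simp only [List.length_replicate, List.drop_replicate]
        rw [List.drop_append]
        simp only [List.length_replicate, List.drop_replicate]
        rw [show a - t.length = 0 from by omega, show q - (t.length - a) = 0 from by omega,
          show c - (t.length - a - q) = a + q + c - t.length from by omega]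
        simp
      have h2 : b.map botSign = List.replicate (a + q + c - t.length) s := by
        have h3 := congrArg List.reverse h2'
        rw [List.reverse_reverse, List.reverse_replicate] at h3
        exact h3
      have ht' : t = List.replicate a (tcol s) ++ (List.replicate q (tcol (!s)) ++
          List.replicate (t.length - a - q) (tcol s)) := by
        apply top_eq
        rw [h1]
        simp [topSign_tcol]
      have hb' : b = List.replicate (a + q + c - t.length) (bcol s) := by
        apply bot_eq
        rw [h2]
        simp [botSign_bcol]
      cases s
      · -- s = false : t = B^a R^q B^..., b = R^... : use swapped-colors GoodPair t b (ii)
        right; right; left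
        refine Or.inr ⟨a, q, t.length - a - q, a + q + c - t.length, ?_, ?_⟩
        · rw [ht']
          simp [tcol, swapColor]
        · rw [hb']
          simp [bcol, swapColor]
      · -- s = true : GoodPair t b (ii)
        left
        refine Or.inr ⟨a, q, t.length - a - q, a + q + c - t.length, ?_, ?_⟩
        · rw [ht']
          simp [tcol]
        · rw [hb']
          simp [bcol]
    · -- case 2 : a < T ≤ a + q
      have h1 : t.map topSign = List.replicate a s ++ List.replicate (t.length - a) (!s) := by
        rw [hT, hw, List.take_append]
        simp only [List.length_replicate, List.take_replicate]
        rw [List.take_append]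
        simp only [List.length_replicate, List.take_replicate]
        rw [show min t.length a = a from by omega,
          show min (t.length - a) q = t.length - a from by omega,
          show t.length - a - q = 0 from by omega]
        simp
      have h2' : (b.map botSign).reverse = List.replicate (a + q - t.length) (!s) ++
          List.replicate c s := by
        rw [hB, hw, List.drop_append]
        simp only [List.length_replicate, List.drop_replicate]
        rw [List.drop_append]
        simp only [List.length_replicate, List.drop_replicate]
        rw [show a - t.length = 0 from by omega,
          show q - (t.length - a) = a + q - t.length from by omega,
          show t.length - a - q = 0 from by omega]
        simp
      have h2 : b.map botSign = List.replicate c s ++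
          List.replicate (a + q - t.length) (!s) := by
        have h3 := congrArg List.reverse h2'
        rw [List.reverse_reverse] at h3
        rw [h3]
        simp
      have ht' : t = List.replicate a (tcol s) ++ List.replicate (t.length - a) (tcol (!s)) := by
        apply top_eq
        rw [h1]
        simp [topSign_tcol]
      have hb' : b = List.replicate c (bcol s) ++
          List.replicate (a + q - t.length) (bcol (!s)) := by
        apply bot_eq
        rw [h2]
        simp [botSign_bcol]
      cases s
      · -- s = false : t = B^a R^(T-a), b = R^c B^(a+q-T) : GoodPair b t (i)
        right; left
        refine Or.inl ⟨c, a + q - t.length, a, t.length - a, ?_, ?_⟩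
        · rw [hb']
          simp [bcol]
        · rw [ht']
          simp [tcol]
      · -- s = true : GoodPair t b (i)
        left
        refine Or.inl ⟨a, t.length - a, c, a + q - t.length, ?_, ?_⟩
        · rw [ht']
          simp [tcol]
        · rw [hb']
          simp [bcol]
  · -- case 1 : T ≤ a
    have h1 : t.map topSign = List.replicate t.length s := by
      rw [hT, hw, List.take_append]
      simp only [List.length_replicate, List.take_replicate]
      rw [show min t.length a = t.length from by omega, show t.length - a = 0 from by omega]
      simp
    have h2' : (b.map botSign).reverse = List.replicate (a - t.length) s ++
        (List.replicate q (!s) ++ List.replicate c s) := by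
      rw [hB, hw, List.drop_append]
      simp only [List.length_replicate, List.drop_replicate]
      rw [show t.length - a = 0 from by omega]
      simp
    have h2 : b.map botSign = List.replicate c s ++ (List.replicate q (!s) ++
        List.replicate (a - t.length) s) := by
      have h3 := congrArg List.reverse h2'
      rw [List.reverse_reverse] at h3
      rw [h3]
      simp [List.append_assoc]
    have ht' : t = List.replicate t.length (tcol s) := by
      apply top_eq
      rw [h1]
      simp [topSign_tcol]
    have hb' : b = List.replicate c (bcol s) ++ (List.replicate q (bcol (!s)) ++
        List.replicate (a - t.length) (bcol s)) := by
      apply bot_eq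
      rw [h2]
      simp [botSign_bcol]
    cases s
    · -- s = false : t = B^T, b = R^c B^q R^(a-T) : GoodPair b t (ii)
      right; left
      refine Or.inr ⟨c, q, a - t.length, t.length, ?_, ?_⟩
      · rw [hb']
        simp [bcol]
      · rw [ht']
        simp [tcol]
    · -- s = true : t = R^T, b = B^c R^q B^(a-T) : GoodPair (b.swap) (t.swap) (ii)
      right; right; right
      refine Or.inr ⟨c, q, a - t.length, t.length, ?_, ?_⟩
      · rw [hb']
        simp [bcol, swapColor]
      · rw [ht']
        simp [tcol, swapColor]

theorem shape_iff_good (t b : List Color) :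
    Shape (wrd t b) ↔
      (GoodPair t b ∨ GoodPair b t ∨ GoodPair (t.map swapColor) (b.map swapColor) ∨
        GoodPair (b.map swapColor) (t.map swapColor)) :=
  ⟨shape_good, good_shape⟩

end Beads

/-- Two-row bead configurations with a unique non-crossing matching are exactly those
of the forms (i) or (ii), up to swapping rows and up to swapping colors, subject to the
balance condition that (#red − #blue) agrees in the two rows. -/
theorem stmt11 (t b : List Color) :
    (∃! m : TRMatching t b, TRNonCrossing m) ↔
      ((t.count Color.red : ℤ) - t.count Color.blue
          = (b.count Color.red : ℤ) - b.count Color.blue) ∧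
        (GoodPair t b ∨ GoodPair b t ∨
          GoodPair (t.map swapColor) (b.map swapColor) ∨
          GoodPair (b.map swapColor) (t.map swapColor)) := by
  rw [Beads.main_equiv, Beads.unique_iff_word, Beads.bal_iff, Beads.shape_iff_good]
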